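/- Let γ > 0, let δ, l, l̇ : [0,T] → ℝ be continuous with l(t) ≠ 0, and let q : [0,T] → ℝ⁴ be differentiable with q̇(t) = Φ(q(t)) − γ·(‖q(t)‖² − 1)·q(t). If ‖q(0)‖ = 1, then ‖q(t)‖ = 1 for all t ∈ [0,T]; i.e. the unit sphere is invariant under the norm-stabilized kite dynamics. -/

import Mathlib

open Set

noncomputable def kitePhi (E vw gk δ l ldot : ℝ) (q : EuclideanSpace ℝ (Fin 4)) :
    EuclideanSpace ℝ (Fin 4) :=
  let va := E * vw * (q 0 ^ 2 + q 1 ^ 2 - q 2 ^ 2 - q 3 ^ 2) - E * ldot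
  (va / (2 * l)) • (WithLp.toLp 2 ![-(q 2), -(q 3), q 0, q 1] : EuclideanSpace ℝ (Fin 4))
    + (vw / l) • (WithLp.toLp 2 ![q 0 * (q 2 ^ 2 + q 3 ^ 2), q 1 * (q 2 ^ 2 + q 3 ^ 2),
        -(q 2) * (q 0 ^ 2 + q 1 ^ 2), -(q 3) * (q 0 ^ 2 + q 1 ^ 2)] :
        EuclideanSpace ℝ (Fin 4))
    + (gk * va * δ / 2) • (WithLp.toLp 2 ![q 1, -(q 0), -(q 3), q 2] : EuclideanSpace ℝ (Fin 4))

lemma kitePhi_orth (E vw gk δ l ldot : ℝ) (q : EuclideanSpace ℝ (Fin 4)) :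
    (inner ℝ q (kitePhi E vw gk δ l ldot q) : ℝ) = 0 := by
  simp only [kitePhi, PiLp.inner_apply, PiLp.smul_apply, PiLp.add_apply, PiLp.toLp_apply, Pi.smul_apply,
    Pi.add_apply, RCLike.inner_apply, conj_trivial, Fin.sum_univ_four, smul_eq_mul,
    Matrix.cons_val_zero, Matrix.cons_val_one, Matrix.head_cons,
    Matrix.cons_val_two, Matrix.tail_cons, Matrix.cons_val_three]
  ring

/-- The unit sphere is invariant under the norm-stabilized kite dynamics. -/
theorem kite_stabilized_unit_sphere_invariant (E vw gk γ T : ℝ) (hγ : 0 < γ)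
    (q : ℝ → EuclideanSpace ℝ (Fin 4)) (l δ ldot : ℝ → ℝ)
    (hδc : ContinuousOn δ (Set.Icc 0 T))
    (hlc : ContinuousOn l (Set.Icc 0 T))
    (hldotc : ContinuousOn ldot (Set.Icc 0 T))
    (hl : ∀ t ∈ Set.Icc 0 T, l t ≠ 0)
    (hq : ∀ t ∈ Set.Icc 0 T, HasDerivWithinAt q
      (kitePhi E vw gk (δ t) (l t) (ldot t) (q t)
        - (γ * (‖q t‖ ^ 2 - 1)) • q t) (Set.Icc 0 T) t)
    (hq0 : ‖q 0‖ = 1) :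
    ∀ t ∈ Set.Icc 0 T, ‖q t‖ = 1 := by
  intro t ht
  have hT : (0 : ℝ) ≤ T := le_trans ht.1 ht.2
  have hqc : ContinuousOn q (Icc 0 T) := fun s hs => (hq s hs).continuousWithinAt
  set r : ℝ → ℝ := fun s => ‖q s‖ ^ 2 - 1 with hr
  have hrc : ContinuousOn r (Icc 0 T) :=
    ((continuous_norm.comp_continuousOn hqc).pow 2).sub continuousOn_const
  -- bound on ‖q‖²
  obtain ⟨x0, _, hmax⟩ := isCompact_Icc.exists_isMaxOn ⟨0, left_mem_Icc.2 hT⟩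
    ((continuous_norm.comp_continuousOn hqc).pow 2)
  set M : ℝ := ‖q x0‖ ^ 2 with hMdef
  have hM : ∀ s ∈ Icc 0 T, ‖q s‖ ^ 2 ≤ M := hmax
  -- derivative of r
  have hrd : ∀ s ∈ Icc 0 T, HasDerivWithinAt r
      (-(2 * γ) * (r s * ‖q s‖ ^ 2)) (Icc 0 T) s := by
    intro s hs
    have h1 := ((hq s hs).inner ℝ (hq s hs)).sub_const 1
    have h2 : (inner ℝ (q s) (kitePhi E vw gk (δ s) (l s) (ldot s) (q s)
        - (γ * (‖q s‖ ^ 2 - 1)) • q s) : ℝ)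
        = -(γ * (‖q s‖ ^ 2 - 1)) * ‖q s‖ ^ 2 := by
      rw [inner_sub_right, kitePhi_orth, real_inner_smul_right, real_inner_self_eq_norm_sq]
      ring
    have h3 : ∀ u : ℝ, (inner ℝ (q u) (q u) : ℝ) - 1 = r u := by
      intro u; rw [real_inner_self_eq_norm_sq]
    have h4 : (inner ℝ (q s) (kitePhi E vw gk (δ s) (l s) (ldot s) (q s)
          - (γ * (‖q s‖ ^ 2 - 1)) • q s) : ℝ)
        + (inner ℝ (kitePhi E vw gk (δ s) (l s) (ldot s) (q s)
          - (γ * (‖q s‖ ^ 2 - 1)) • q s) (q s) : ℝ)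
        = -(2 * γ) * (r s * ‖q s‖ ^ 2) := by
      rw [real_inner_comm (q s), h2, hr]; ring
    rw [← h4]
    exact h1.congr (fun u _ => (h3 u).symm) (h3 s).symm
  -- Gronwall
  have hbound : ∀ s ∈ Ico 0 T, ‖-(2 * γ) * (r s * ‖q s‖ ^ 2)‖
      ≤ (2 * γ * M) * ‖r s‖ + 0 := by
    intro s hs
    have hsI : s ∈ Icc 0 T := Ico_subset_Icc_self hs
    rw [add_zero, norm_mul, norm_mul]
    have h1 : ‖-(2 * γ)‖ = 2 * γ := by
      rw [norm_neg, Real.norm_eq_abs, abs_of_pos (by linarith)]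
    have h2 : ‖‖q s‖ ^ 2‖ ≤ M := by
      rw [Real.norm_eq_abs, abs_of_nonneg (by positivity)]; exact hM s hsI
    rw [h1]
    calc 2 * γ * (‖r s‖ * ‖‖q s‖ ^ 2‖) ≤ 2 * γ * (‖r s‖ * M) := by
          apply mul_le_mul_of_nonneg_left _ (by linarith)
          exact mul_le_mul_of_nonneg_left h2 (norm_nonneg _)
      _ = (2 * γ * M) * ‖r s‖ := by ring
  have hr0 : ‖r 0‖ ≤ 0 := by simp [hr, hq0]
  have := norm_le_gronwallBound_of_norm_deriv_right_le (f := r)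
    (f' := fun s => -(2 * γ) * (r s * ‖q s‖ ^ 2)) (a := 0) (b := T)
    hrc (fun s hs => (hrd s (Ico_subset_Icc_self hs)).mono_of_mem_nhdsWithin
      (Icc_mem_nhdsGE_of_mem ⟨hs.1, hs.2⟩)) hr0 hbound t ht
  rw [sub_zero, gronwallBound_ε0, zero_mul] at this
  have hrt : r t = 0 := by
    have h := (norm_nonneg (r t)).antisymm this
    exact norm_eq_zero.mp h.symm
  have : ‖q t‖ ^ 2 = 1 := by simpa [hr, sub_eq_zero] using hrt
  nlinarith [norm_nonneg (q t)]
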